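/- Truthful probability bound: For any noise mechanism D, any edge ε of the PCN, and any sequence of transactions processed so far, the probability that the public balance of ε equals the true balance of ε is at least the utility U(D). -/
import Mathlib


open Finset

/-- A noise mechanism assigns, to each path (indexed by `i : ι`), a probability
distribution over subsets of its oriented-edge set. -/
def ValidMech {V : Type} [Fintype V] [DecidableEq V]
    {ι : Type} (edges : ι → Finset (V × V))
    (D : ι → Finset (V × V) → ℝ) : Prop :=
  ∀ i, (∀ Q, 0 ≤ D i Q) ∧ (∑ Q ∈ (edges i).powerset, D i Q) = 1 ∧
    ∀ Q, ¬ Q ⊆ edges i → D i Q = 0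

/-- Utility U(D): minimum over paths and edges of the reveal probability. -/
noncomputable def Utility {V : Type} [Fintype V] [DecidableEq V]
    {ι : Type} (edges : ι → Finset (V × V))
    (D : ι → Finset (V × V) → ℝ) : ℝ :=
  sInf { x : ℝ | ∃ i : ι, ∃ e ∈ edges i,
    x = ∑ Q ∈ (edges i).powerset.filter (fun Q => e ∈ Q), D i Q }

/-- The utility is at most any particular reveal probability. -/
lemma utility_le_reveal {V : Type} [Fintype V] [DecidableEq V]
    {ι : Type} (edges : ι → Finset (V × V))
    (D : ι → Finset (V × V) → ℝ) (hD : ValidMech edges D)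
    (i : ι) (e : V × V) (he : e ∈ edges i) :
    Utility edges D ≤ ∑ Q ∈ (edges i).powerset.filter (fun Q => e ∈ Q), D i Q := by
  apply csInf_le
  · refine ⟨0, ?_⟩
    rintro x ⟨i', e', _, rfl⟩
    exact Finset.sum_nonneg fun Q _ => (hD i').1 Q
  · exact ⟨i, e, he, rfl⟩

/-- Summing `D i` over *all* subsets of `V × V` gives `1`. -/
lemma sum_univ_D {V : Type} [Fintype V] [DecidableEq V]
    {ι : Type} (edges : ι → Finset (V × V))
    (D : ι → Finset (V × V) → ℝ) (hD : ValidMech edges D) (i : ι) :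
    ∑ Q ∈ (univ : Finset (Finset (V × V))), D i Q = 1 := by
  rw [← (hD i).2.1]
  refine (Finset.sum_subset (Finset.subset_univ _) ?_).symm
  intro Q _ hQ
  exact (hD i).2.2 Q (by simpa using hQ)

/-- Summing `D i` over all subsets containing `e` equals the reveal probability. -/
lemma sum_filter_D {V : Type} [Fintype V] [DecidableEq V]
    {ι : Type} (edges : ι → Finset (V × V))
    (D : ι → Finset (V × V) → ℝ) (hD : ValidMech edges D) (i : ι) (e : V × V) :
    ∑ Q ∈ (univ : Finset (Finset (V × V))).filter (fun Q => e ∈ Q), D i Q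
      = ∑ Q ∈ (edges i).powerset.filter (fun Q => e ∈ Q), D i Q := by
  refine (Finset.sum_subset ?_ ?_).symm
  · exact Finset.filter_subset_filter _ (Finset.subset_univ _)
  · intro Q hQ hQ'
    simp only [Finset.mem_filter, Finset.mem_powerset, Finset.mem_univ, true_and] at hQ hQ'
    exact (hD i).2.2 Q (fun h => hQ' ⟨h, hQ⟩)

theorem truthful_probability_bound
    {V : Type} [Fintype V] [DecidableEq V]
    {ι : Type} [Fintype ι] [Nonempty ι]
    (edges : ι → Finset (V × V)) (hne : ∀ i, (edges i).Nonempty)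
    (D : ι → Finset (V × V) → ℝ) (hD : ValidMech edges D)
    (ps : List ι) (ε : V × V) :
    Utility edges D ≤
      ∑ ω ∈ (Finset.univ : Finset (Fin ps.length → Finset (V × V))).filter
          (fun ω => ∀ j : Fin ps.length,
            (ε ∈ edges (ps.get j) ∧
              ∀ j' : Fin ps.length, j < j' → ε ∉ edges (ps.get j')) → ε ∈ ω j),
        ∏ j, D (ps.get j) (ω j) := by
  classical
  set S : Finset (Fin ps.length) :=
    univ.filter (fun j => ε ∈ edges (ps.get j)) with hSdef
  by_cases hS : S.Nonempty
  · -- there is a last transaction through ε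
    set j₀ : Fin ps.length := S.max' hS with hj₀
    have hj₀mem : ε ∈ edges (ps.get j₀) := by
      exact (Finset.mem_filter.mp (S.max'_mem hS)).2
    have hj₀max : ∀ j' : Fin ps.length, j₀ < j' → ε ∉ edges (ps.get j') := by
      intro j' hlt hmem
      have : j' ∈ S := by
        rw [hSdef]; exact Finset.mem_filter.mpr ⟨Finset.mem_univ _, hmem⟩
      exact absurd (S.le_max' j' this) (not_le.mpr hlt)
    -- the filter set is exactly a product set
    set t : Fin ps.length → Finset (Finset (V × V)) :=
      fun j => if j = j₀ then (univ : Finset (Finset (V × V))).filter (fun Q => ε ∈ Q)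
        else univ with ht
    have hset : (Finset.univ : Finset (Fin ps.length → Finset (V × V))).filter
          (fun ω => ∀ j : Fin ps.length,
            (ε ∈ edges (ps.get j) ∧
              ∀ j' : Fin ps.length, j < j' → ε ∉ edges (ps.get j')) → ε ∈ ω j)
        = Fintype.piFinset t := by
      ext ω
      simp only [Finset.mem_filter, Finset.mem_univ, true_and, Fintype.mem_piFinset, ht]
      constructor
      · intro h j
        by_cases hj : j = j₀
        · subst hj
          simp [h j₀ ⟨hj₀mem, hj₀max⟩]
        · simp [hj]
      · intro h j hjcond
        have hjle : j ≤ j₀ := S.le_max' j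
          (by rw [hSdef]; exact Finset.mem_filter.mpr ⟨Finset.mem_univ _, hjcond.1⟩)
        have hjeq : j = j₀ := by
          rcases lt_or_eq_of_le hjle with hlt | heq
          · exact absurd hj₀mem (hjcond.2 j₀ hlt)
          · exact heq
        have := h j
        rw [if_pos hjeq] at this
        exact (Finset.mem_filter.mp this).2
    rw [hset, ← Finset.prod_univ_sum]
    have hval : ∀ j : Fin ps.length,
        (∑ Q ∈ t j, D (ps.get j) Q)
          = if j = j₀ then ∑ Q ∈ (edges (ps.get j₀)).powerset.filter (fun Q => ε ∈ Q),
              D (ps.get j₀) Q else 1 := by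
      intro j
      by_cases hj : j = j₀
      · subst hj
        simp [ht, sum_filter_D edges D hD]
      · simp [ht, hj, sum_univ_D edges D hD]
    calc Utility edges D
        ≤ ∑ Q ∈ (edges (ps.get j₀)).powerset.filter (fun Q => ε ∈ Q), D (ps.get j₀) Q :=
          utility_le_reveal edges D hD _ ε hj₀mem
      _ = ∏ j : Fin ps.length, ∑ Q ∈ t j, D (ps.get j) Q := by
          rw [Finset.prod_congr rfl (fun j _ => hval j), Finset.prod_ite_eq' univ j₀]
          simp
  · -- ε is never routed through: the condition is vacuous
    have hvac : (Finset.univ : Finset (Fin ps.length → Finset (V × V))).filter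
          (fun ω => ∀ j : Fin ps.length,
            (ε ∈ edges (ps.get j) ∧
              ∀ j' : Fin ps.length, j < j' → ε ∉ edges (ps.get j')) → ε ∈ ω j)
        = univ := by
      refine Finset.filter_true_of_mem ?_
      intro ω _ j hj
      exact absurd (show j ∈ S by
        rw [hSdef]; exact Finset.mem_filter.mpr ⟨Finset.mem_univ _, hj.1⟩)
        (fun h => hS ⟨j, h⟩)
    rw [hvac]
    have hsum : ∑ ω ∈ (univ : Finset (Fin ps.length → Finset (V × V))),
        ∏ j, D (ps.get j) (ω j) = 1 := by
      rw [← Fintype.piFinset_univ, ← Finset.prod_univ_sum]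
      simp [sum_univ_D edges D hD]
    rw [hsum]
    obtain ⟨i⟩ := ‹Nonempty ι›
    obtain ⟨e, he⟩ := hne i
    calc Utility edges D
        ≤ ∑ Q ∈ (edges i).powerset.filter (fun Q => e ∈ Q), D i Q :=
          utility_le_reveal edges D hD i e he
      _ ≤ ∑ Q ∈ (edges i).powerset, D i Q :=
          Finset.sum_le_sum_of_subset_of_nonneg (Finset.filter_subset _ _)
            (fun Q _ _ => (hD i).1 Q)
      _ = 1 := (hD i).2.1
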